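/- Let M ≥ 1, let 0 = x₀ < ⋯ < x_M = 1 be a partition of [0,1], N ≥ 1, k₀,…,k_{N−1} > 0, γ > 0, and W : ℝ → ℝ continuous. For each time level n = 0,…,N and cell i let ρⁿᵢ, vⁿᵢ, qⁿᵢ : [xᵢ, xᵢ₊₁] → ℝ be continuously differentiable, and for each n = 0,…,N−1 let τ̂ⁿᵢ : [xᵢ, xᵢ₊₁] → ℝ (the half-step chemical potential) be continuously differentiable; assume vⁿ₀(0) = vⁿ_{M−1}(1) = 0 and qⁿ₀(0) = qⁿ_{M−1}(1) = 0 for all n. Write uⁿ⁺½ᵢ := ½(uⁿᵢ + u^{n+1}ᵢ) for u ∈ {ρ, v, q}. Assume for each n = 0,…,N−1, with all cell integrals over [xᵢ, xᵢ₊₁] and node sums over j = 1,…,M−1: (1) Σᵢ ∫ [ (ρ^{n+1}ᵢ − ρⁿᵢ)/kₙ + ∂ₓ(ρⁿ⁺½ᵢ vⁿ⁺½ᵢ) ] τ̂ⁿᵢ dx = Σⱼ [ρ^{n+½}v^{n+½}]ⱼ {τ̂ⁿ}ⱼ; (2) Σᵢ ∫ [ ρⁿ⁺½ᵢ (v^{n+1}ᵢ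 − vⁿᵢ)/kₙ + ∂ₓ(ρⁿ⁺½ᵢ (vⁿ⁺½ᵢ)²) − ∂ₓ(ρⁿ⁺½ᵢ vⁿ⁺½ᵢ) vⁿ⁺½ᵢ + ρⁿ⁺½ᵢ ∂ₓτ̂ⁿᵢ − ½ ρⁿ⁺½ᵢ ∂ₓ((vⁿ⁺½ᵢ)²) ] vⁿ⁺½ᵢ dx = Σⱼ [τ̂ⁿ]ⱼ {ρ^{n+½}v^{n+½}}ⱼ; (3) Σᵢ ∫ [ τ̂ⁿᵢ (ρ^{n+1}ᵢ − ρⁿᵢ) − (W(ρ^{n+1}ᵢ) − W(ρⁿᵢ)) + ( γ ∂ₓqⁿ⁺½ᵢ − ¼((v^{n+1}ᵢ)² + (vⁿᵢ)²) ) (ρ^{n+1}ᵢ − ρⁿᵢ) ] dx = γ Σⱼ [q^{n+½}]ⱼ {ρ^{n+1} − ρⁿ}ⱼ; (4) Σᵢ ∫ ( q^{n+1}ᵢ − qⁿᵢ − ∂ₓρ^{n+1}ᵢ + ∂ₓρⁿᵢ ) qⁿ⁺½ᵢ dx = − Σⱼ [ρ^{n+1} − ρⁿ]ⱼ {q^{n+½}}ⱼ.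 Then the fully discrete energy is exactly conserved: Σᵢ ∫_{xᵢ}^{xᵢ₊₁} [ W(ρⁿᵢ) + ½ρⁿᵢ(vⁿᵢ)² + (γ/2)(qⁿᵢ)² ] dx = Σᵢ ∫_{xᵢ}^{xᵢ₊₁} [ W(ρ⁰ᵢ) + ½ρ⁰ᵢ(v⁰ᵢ)² + (γ/2)(q⁰ᵢ)² ] dx for every n = 0,…,N. -/

import Mathlib

open Set MeasureTheory

/-- Half-step value `u^{n+½}ᵢ(y) = ½(uⁿᵢ(y) + u^{n+1}ᵢ(y))` of a time-indexed
family of cellwise functions. -/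
noncomputable def halfStep (u : ℕ → ℕ → ℝ → ℝ) (n i : ℕ) (y : ℝ) : ℝ :=
  (u n i y + u (n + 1) i y) / 2

private lemma telescope_sum (f : ℕ → ℕ → ℝ) :
    ∀ M : ℕ, 1 ≤ M →
      ∑ i ∈ Finset.range M, (f i (i + 1) - f i i)
        = (∑ j ∈ Finset.Ico 1 M, (f (j - 1) j - f j j)) + f (M - 1) M - f 0 0 := by
  intro M
  induction M with
  | zero => intro h; exact absurd h (by norm_num)
  | succ m ih =>
    intro _
    rcases Nat.eq_zero_or_pos m with hm | hm
    · subst hm; simp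
    · rw [Finset.sum_range_succ, ih hm, Finset.sum_Ico_succ_top hm]
      have h1 : m + 1 - 1 = m := rfl
      have h2 : m - 1 + 1 = m := Nat.succ_pred_eq_of_pos hm
      rw [h1]
      ring
set_option maxHeartbeats 4000000 in
/-- Energy conservation for the fully discrete (Crank–Nicolson in time, DG in
space) scheme for the Euler–Korteweg system (`μ = 0`) on a partition
`0 = x₀ < ⋯ < x_M = 1`, with energy-consistent fluxes and with the four
equations tested respectively by the half-step chemical potential `τ̂ⁿ`, the
half-step velocity `v^{n+½}`, the increment `ρ^{n+1} − ρⁿ`, and the half-step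
gradient variable `q^{n+½}`: the fully discrete energy
`Σᵢ ∫ W(ρⁿᵢ) + ½ρⁿᵢ(vⁿᵢ)² + (γ/2)(qⁿᵢ)²` is exactly conserved. -/
theorem dg_fully_discrete_energy_conservation
    (M : ℕ) (hM : 1 ≤ M) (xp : ℕ → ℝ)
    (hx0 : xp 0 = 0) (hxM : xp M = 1)
    (hx : ∀ i < M, xp i < xp (i + 1))
    (N : ℕ) (hN : 1 ≤ N) (k : ℕ → ℝ) (hk : ∀ n < N, 0 < k n)
    (γ : ℝ) (hγ : 0 < γ) (W : ℝ → ℝ) (hW : Continuous W)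
    (ρ v q : ℕ → ℕ → ℝ → ℝ)  -- time level, cell index, position
    (τh : ℕ → ℕ → ℝ → ℝ)    -- half-step chemical potential, time levels n < N
    (hρ : ∀ n ≤ N, ∀ i < M, ContDiff ℝ 1 (ρ n i))
    (hv : ∀ n ≤ N, ∀ i < M, ContDiff ℝ 1 (v n i))
    (hq : ∀ n ≤ N, ∀ i < M, ContDiff ℝ 1 (q n i))
    (hτ : ∀ n < N, ∀ i < M, ContDiff ℝ 1 (τh n i))
    -- boundary conditions
    (hbv : ∀ n ≤ N, v n 0 0 = 0 ∧ v n (M - 1) 1 = 0)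
    (hbq : ∀ n ≤ N, q n 0 0 = 0 ∧ q n (M - 1) 1 = 0)
    -- (1) mass equation tested with τ̂ⁿ
    (h1 : ∀ n < N,
      ∑ i ∈ Finset.range M, ∫ y in xp i..xp (i + 1),
          (((ρ (n + 1) i y - ρ n i y) / k n
              + deriv (fun z => halfStep ρ n i z * halfStep v n i z) y)
            * τh n i y)
        = ∑ j ∈ Finset.Ico 1 M,
            (halfStep ρ n (j - 1) (xp j) * halfStep v n (j - 1) (xp j)
              - halfStep ρ n j (xp j) * halfStep v n j (xp j))
            * ((τh n (j - 1) (xp j) + τh n j (xp j)) / 2))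
    -- (2) momentum equation tested with v^{n+½}
    (h2 : ∀ n < N,
      ∑ i ∈ Finset.range M, ∫ y in xp i..xp (i + 1),
          ((halfStep ρ n i y * ((v (n + 1) i y - v n i y) / k n)
              + deriv (fun z => halfStep ρ n i z * (halfStep v n i z) ^ 2) y
              - deriv (fun z => halfStep ρ n i z * halfStep v n i z) y
                  * halfStep v n i y
              + halfStep ρ n i y * deriv (τh n i) y
              - (1/2) * halfStep ρ n i y
                  * deriv (fun z => (halfStep v n i z) ^ 2) y)
            * halfStep v n i y)
        = ∑ j ∈ Finset.Ico 1 M,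
            (τh n (j - 1) (xp j) - τh n j (xp j))
            * ((halfStep ρ n (j - 1) (xp j) * halfStep v n (j - 1) (xp j)
                + halfStep ρ n j (xp j) * halfStep v n j (xp j)) / 2))
    -- (3) chemical-potential equation tested with ρ^{n+1} − ρⁿ (multiplied out)
    (h3 : ∀ n < N,
      ∑ i ∈ Finset.range M, ∫ y in xp i..xp (i + 1),
          (τh n i y * (ρ (n + 1) i y - ρ n i y)
            - (W (ρ (n + 1) i y) - W (ρ n i y))
            + (γ * deriv (fun z => halfStep q n i z) y
                - (1/4) * ((v (n + 1) i y) ^ 2 + (v n i y) ^ 2))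
              * (ρ (n + 1) i y - ρ n i y))
        = γ * ∑ j ∈ Finset.Ico 1 M,
            (halfStep q n (j - 1) (xp j) - halfStep q n j (xp j))
            * (((ρ (n + 1) (j - 1) (xp j) - ρ n (j - 1) (xp j))
                + (ρ (n + 1) j (xp j) - ρ n j (xp j))) / 2))
    -- (4) incremental gradient equation tested with q^{n+½}
    (h4 : ∀ n < N,
      ∑ i ∈ Finset.range M, ∫ y in xp i..xp (i + 1),
          ((q (n + 1) i y - q n i y
              - deriv (ρ (n + 1) i) y + deriv (ρ n i) y)
            * halfStep q n i y)
        = -∑ j ∈ Finset.Ico 1 M,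
            ((ρ (n + 1) (j - 1) (xp j) - ρ n (j - 1) (xp j))
              - (ρ (n + 1) j (xp j) - ρ n j (xp j)))
            * ((halfStep q n (j - 1) (xp j) + halfStep q n j (xp j)) / 2)) :
    ∀ n ≤ N,
      (∑ i ∈ Finset.range M, ∫ y in xp i..xp (i + 1),
          (W (ρ n i y) + (1/2) * ρ n i y * (v n i y) ^ 2
            + (γ/2) * (q n i y) ^ 2))
        = ∑ i ∈ Finset.range M, ∫ y in xp i..xp (i + 1),
            (W (ρ 0 i y) + (1/2) * ρ 0 i y * (v 0 i y) ^ 2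
              + (γ/2) * (q 0 i y) ^ 2) := by
  have key : ∀ n < N,
      (∑ i ∈ Finset.range M, ∫ y in xp i..xp (i + 1),
          (W (ρ (n+1) i y) + (1/2) * ρ (n+1) i y * (v (n+1) i y) ^ 2
            + (γ/2) * (q (n+1) i y) ^ 2))
        = ∑ i ∈ Finset.range M, ∫ y in xp i..xp (i + 1),
            (W (ρ n i y) + (1/2) * ρ n i y * (v n i y) ^ 2
              + (γ/2) * (q n i y) ^ 2) := by
    intro n hn
    have hnN : n ≤ N := hn.le
    have hn1N : n + 1 ≤ N := hn
    have hkn : (k n) ≠ 0 := ne_of_gt (hk n hn)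
    set G : ℕ → ℝ → ℝ := fun i z =>
      k n * (halfStep ρ n i z * halfStep v n i z * τh n i z)
        - γ * (halfStep q n i z * (ρ (n + 1) i z - ρ n i z)) with hG
    -- per-cell identity
    have cell : ∀ i < M,
        k n * (∫ y in xp i..xp (i + 1),
          (((ρ (n + 1) i y - ρ n i y) / k n
              + deriv (fun z => halfStep ρ n i z * halfStep v n i z) y)
            * τh n i y))
        + k n * (∫ y in xp i..xp (i + 1),
          ((halfStep ρ n i y * ((v (n + 1) i y - v n i y) / k n)
              + deriv (fun z => halfStep ρ n i z * (halfStep v n i z) ^ 2) y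
              - deriv (fun z => halfStep ρ n i z * halfStep v n i z) y
                  * halfStep v n i y
              + halfStep ρ n i y * deriv (τh n i) y
              - (1/2) * halfStep ρ n i y
                  * deriv (fun z => (halfStep v n i z) ^ 2) y)
            * halfStep v n i y))
        - (∫ y in xp i..xp (i + 1),
          (τh n i y * (ρ (n + 1) i y - ρ n i y)
            - (W (ρ (n + 1) i y) - W (ρ n i y))
            + (γ * deriv (fun z => halfStep q n i z) y
                - (1/4) * ((v (n + 1) i y) ^ 2 + (v n i y) ^ 2))
              * (ρ (n + 1) i y - ρ n i y)))
        + γ * (∫ y in xp i..xp (i + 1),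
          ((q (n + 1) i y - q n i y
              - deriv (ρ (n + 1) i) y + deriv (ρ n i) y)
            * halfStep q n i y))
        = (∫ y in xp i..xp (i + 1),
            (W (ρ (n+1) i y) + (1/2) * ρ (n+1) i y * (v (n+1) i y) ^ 2
              + (γ/2) * (q (n+1) i y) ^ 2))
          - (∫ y in xp i..xp (i + 1),
            (W (ρ n i y) + (1/2) * ρ n i y * (v n i y) ^ 2
              + (γ/2) * (q n i y) ^ 2))
          + (G i (xp (i + 1)) - G i (xp i)) := by
      intro i hi
      have hr0 := hρ n hnN i hi
      have hr1 := hρ (n+1) hn1N i hi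
      have hv0 := hv n hnN i hi
      have hv1 := hv (n+1) hn1N i hi
      have hq0 := hq n hnN i hi
      have hq1 := hq (n+1) hn1N i hi
      have hth := hτ n hn i hi
      have hrb : ContDiff ℝ 1 (halfStep ρ n i) := by
        unfold halfStep; exact (hr0.add hr1).div_const 2
      have hvb : ContDiff ℝ 1 (halfStep v n i) := by
        unfold halfStep; exact (hv0.add hv1).div_const 2
      have hqb : ContDiff ℝ 1 (halfStep q n i) := by
        unfold halfStep; exact (hq0.add hq1).div_const 2
      have hGc : ContDiff ℝ 1 (G i) := by
        simp only [hG]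
        exact (contDiff_const.mul ((hrb.mul hvb).mul hth)).sub
          (contDiff_const.mul (hqb.mul (hr1.sub hr0)))
      -- pointwise identity
      have pident : ∀ y : ℝ,
          k n * ((((ρ (n + 1) i y - ρ n i y) / k n
              + deriv (fun z => halfStep ρ n i z * halfStep v n i z) y)
            * τh n i y))
          + k n * (((halfStep ρ n i y * ((v (n + 1) i y - v n i y) / k n)
              + deriv (fun z => halfStep ρ n i z * (halfStep v n i z) ^ 2) y
              - deriv (fun z => halfStep ρ n i z * halfStep v n i z) y
                  * halfStep v n i y
              + halfStep ρ n i y * deriv (τh n i) y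
              - (1/2) * halfStep ρ n i y
                  * deriv (fun z => (halfStep v n i z) ^ 2) y)
            * halfStep v n i y))
          - ((τh n i y * (ρ (n + 1) i y - ρ n i y)
            - (W (ρ (n + 1) i y) - W (ρ n i y))
            + (γ * deriv (fun z => halfStep q n i z) y
                - (1/4) * ((v (n + 1) i y) ^ 2 + (v n i y) ^ 2))
              * (ρ (n + 1) i y - ρ n i y)))
          + γ * (((q (n + 1) i y - q n i y
              - deriv (ρ (n + 1) i) y + deriv (ρ n i) y)
            * halfStep q n i y))
          = (W (ρ (n+1) i y) + (1/2) * ρ (n+1) i y * (v (n+1) i y) ^ 2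
              + (γ/2) * (q (n+1) i y) ^ 2)
            - (W (ρ n i y) + (1/2) * ρ n i y * (v n i y) ^ 2
              + (γ/2) * (q n i y) ^ 2)
            + deriv (G i) y := by
        intro y
        have hRd : HasDerivAt (halfStep ρ n i) (deriv (halfStep ρ n i) y) y :=
          ((hrb.differentiable one_ne_zero) y).hasDerivAt
        have hVd : HasDerivAt (halfStep v n i) (deriv (halfStep v n i) y) y :=
          ((hvb.differentiable one_ne_zero) y).hasDerivAt
        have hQd : HasDerivAt (halfStep q n i) (deriv (halfStep q n i) y) y :=
          ((hqb.differentiable one_ne_zero) y).hasDerivAt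
        have hTd : HasDerivAt (τh n i) (deriv (τh n i) y) y :=
          ((hth.differentiable one_ne_zero) y).hasDerivAt
        have hP0d : HasDerivAt (ρ n i) (deriv (ρ n i) y) y :=
          ((hr0.differentiable one_ne_zero) y).hasDerivAt
        have hP1d : HasDerivAt (ρ (n+1) i) (deriv (ρ (n+1) i) y) y :=
          ((hr1.differentiable one_ne_zero) y).hasDerivAt
        have hV2d : HasDerivAt (fun z => (halfStep v n i z) ^ 2)
            (2 * halfStep v n i y * deriv (halfStep v n i) y) y := by
          have := hVd.pow 2; simp at this; exact this
        have e_rv : deriv (fun z => halfStep ρ n i z * halfStep v n i z) y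
            = deriv (halfStep ρ n i) y * halfStep v n i y
              + halfStep ρ n i y * deriv (halfStep v n i) y := (hRd.mul hVd).deriv
        have e_v2 : deriv (fun z => (halfStep v n i z) ^ 2) y
            = 2 * halfStep v n i y * deriv (halfStep v n i) y := hV2d.deriv
        have e_rv2 : deriv (fun z => halfStep ρ n i z * (halfStep v n i z) ^ 2) y
            = deriv (halfStep ρ n i) y * (halfStep v n i y) ^ 2
              + halfStep ρ n i y
                * (2 * halfStep v n i y * deriv (halfStep v n i) y) :=
          (hRd.mul hV2d).deriv
        have e_q : deriv (fun z => halfStep q n i z) y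
            = deriv (halfStep q n i) y := rfl
        have hA : HasDerivAt
            (fun z => halfStep ρ n i z * halfStep v n i z * τh n i z)
            ((deriv (halfStep ρ n i) y * halfStep v n i y
                + halfStep ρ n i y * deriv (halfStep v n i) y) * τh n i y
              + halfStep ρ n i y * halfStep v n i y * deriv (τh n i) y) y :=
          (hRd.mul hVd).mul hTd
        have hB : HasDerivAt
            (fun z => halfStep q n i z * (ρ (n + 1) i z - ρ n i z))
            (deriv (halfStep q n i) y * (ρ (n + 1) i y - ρ n i y)
              + halfStep q n i y * (deriv (ρ (n + 1) i) y - deriv (ρ n i) y)) y :=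
          hQd.mul (hP1d.sub hP0d)
        have e_G : deriv (G i) y
            = k n * ((deriv (halfStep ρ n i) y * halfStep v n i y
                + halfStep ρ n i y * deriv (halfStep v n i) y) * τh n i y
              + halfStep ρ n i y * halfStep v n i y * deriv (τh n i) y)
              - γ * (deriv (halfStep q n i) y * (ρ (n + 1) i y - ρ n i y)
              + halfStep q n i y * (deriv (ρ (n + 1) i) y - deriv (ρ n i) y)) := by
          simp only [hG]
          exact ((hA.const_mul (k n)).sub (hB.const_mul γ)).deriv
        rw [e_rv, e_v2, e_rv2, e_q, e_G]
        have uR : halfStep ρ n i y = (ρ n i y + ρ (n + 1) i y) / 2 := rfl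
        have uV : halfStep v n i y = (v n i y + v (n + 1) i y) / 2 := rfl
        have uQ : halfStep q n i y = (q n i y + q (n + 1) i y) / 2 := rfl
        rw [uR, uV, uQ]
        field_simp
        ring
      -- continuity facts
      have cR : Continuous (ρ n i) := hr0.continuous
      have cR1 : Continuous (ρ (n+1) i) := hr1.continuous
      have cV : Continuous (v n i) := hv0.continuous
      have cV1 : Continuous (v (n+1) i) := hv1.continuous
      have cQ : Continuous (q n i) := hq0.continuous
      have cQ1 : Continuous (q (n+1) i) := hq1.continuous
      have cT : Continuous (τh n i) := hth.continuous
      have cRb : Continuous (halfStep ρ n i) := hrb.continuous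
      have cVb : Continuous (halfStep v n i) := hvb.continuous
      have cQb : Continuous (halfStep q n i) := hqb.continuous
      have cdRV : Continuous (deriv (fun z => halfStep ρ n i z * halfStep v n i z)) :=
        (hrb.mul hvb).continuous_deriv le_rfl
      have cdRV2 : Continuous (deriv (fun z => halfStep ρ n i z * (halfStep v n i z) ^ 2)) :=
        (hrb.mul (hvb.pow 2)).continuous_deriv le_rfl
      have cdV2 : Continuous (deriv (fun z => (halfStep v n i z) ^ 2)) :=
        (hvb.pow 2).continuous_deriv le_rfl
      have cdT : Continuous (deriv (τh n i)) := hth.continuous_deriv le_rfl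
      have cdQb : Continuous (deriv (fun z => halfStep q n i z)) :=
        hqb.continuous_deriv le_rfl
      have cdR0 : Continuous (deriv (ρ n i)) := hr0.continuous_deriv le_rfl
      have cdR1 : Continuous (deriv (ρ (n+1) i)) := hr1.continuous_deriv le_rfl
      have I1 : IntervalIntegrable (fun y =>
          (((ρ (n + 1) i y - ρ n i y) / k n
              + deriv (fun z => halfStep ρ n i z * halfStep v n i z) y)
            * τh n i y)) volume (xp i) (xp (i + 1)) :=
        ((((cR1.sub cR).div_const (k n)).add cdRV).mul cT).intervalIntegrable _ _
      have I2 : IntervalIntegrable (fun y =>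
          ((halfStep ρ n i y * ((v (n + 1) i y - v n i y) / k n)
              + deriv (fun z => halfStep ρ n i z * (halfStep v n i z) ^ 2) y
              - deriv (fun z => halfStep ρ n i z * halfStep v n i z) y
                  * halfStep v n i y
              + halfStep ρ n i y * deriv (τh n i) y
              - (1/2) * halfStep ρ n i y
                  * deriv (fun z => (halfStep v n i z) ^ 2) y)
            * halfStep v n i y)) volume (xp i) (xp (i + 1)) :=
        ((((((cRb.mul ((cV1.sub cV).div_const (k n))).add cdRV2).sub
            (cdRV.mul cVb)).add (cRb.mul cdT)).sub
            ((continuous_const.mul cRb).mul cdV2)).mul cVb).intervalIntegrable _ _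
      have I3 : IntervalIntegrable (fun y =>
          (τh n i y * (ρ (n + 1) i y - ρ n i y)
            - (W (ρ (n + 1) i y) - W (ρ n i y))
            + (γ * deriv (fun z => halfStep q n i z) y
                - (1/4) * ((v (n + 1) i y) ^ 2 + (v n i y) ^ 2))
              * (ρ (n + 1) i y - ρ n i y))) volume (xp i) (xp (i + 1)) :=
        (((cT.mul (cR1.sub cR)).sub ((hW.comp cR1).sub (hW.comp cR))).add
          (((continuous_const.mul cdQb).sub
            (continuous_const.mul ((cV1.pow 2).add (cV.pow 2)))).mul
              (cR1.sub cR))).intervalIntegrable _ _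
      have I4 : IntervalIntegrable (fun y =>
          ((q (n + 1) i y - q n i y
              - deriv (ρ (n + 1) i) y + deriv (ρ n i) y)
            * halfStep q n i y)) volume (xp i) (xp (i + 1)) :=
        ((((cQ1.sub cQ).sub cdR1).add cdR0).mul cQb).intervalIntegrable _ _
      have Ien1 : IntervalIntegrable (fun y =>
          (W (ρ (n+1) i y) + (1/2) * ρ (n+1) i y * (v (n+1) i y) ^ 2
            + (γ/2) * (q (n+1) i y) ^ 2)) volume (xp i) (xp (i + 1)) :=
        (((hW.comp cR1).add ((continuous_const.mul cR1).mul (cV1.pow 2))).add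
          (continuous_const.mul (cQ1.pow 2))).intervalIntegrable _ _
      have Ien0 : IntervalIntegrable (fun y =>
          (W (ρ n i y) + (1/2) * ρ n i y * (v n i y) ^ 2
            + (γ/2) * (q n i y) ^ 2)) volume (xp i) (xp (i + 1)) :=
        (((hW.comp cR).add ((continuous_const.mul cR).mul (cV.pow 2))).add
          (continuous_const.mul (cQ.pow 2))).intervalIntegrable _ _
      have IdG : IntervalIntegrable (deriv (G i)) volume (xp i) (xp (i + 1)) :=
        (hGc.continuous_deriv le_rfl).intervalIntegrable _ _
      have ftc : (∫ y in xp i..xp (i + 1), deriv (G i) y)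
          = G i (xp (i + 1)) - G i (xp i) :=
        intervalIntegral.integral_deriv_eq_sub
          (fun y _ => (hGc.differentiable one_ne_zero).differentiableAt) IdG
      have merged : (∫ y in xp i..xp (i + 1),
          (k n * ((((ρ (n + 1) i y - ρ n i y) / k n
              + deriv (fun z => halfStep ρ n i z * halfStep v n i z) y)
            * τh n i y))
          + k n * (((halfStep ρ n i y * ((v (n + 1) i y - v n i y) / k n)
              + deriv (fun z => halfStep ρ n i z * (halfStep v n i z) ^ 2) y
              - deriv (fun z => halfStep ρ n i z * halfStep v n i z) y
                  * halfStep v n i y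
              + halfStep ρ n i y * deriv (τh n i) y
              - (1/2) * halfStep ρ n i y
                  * deriv (fun z => (halfStep v n i z) ^ 2) y)
            * halfStep v n i y))
          - ((τh n i y * (ρ (n + 1) i y - ρ n i y)
            - (W (ρ (n + 1) i y) - W (ρ n i y))
            + (γ * deriv (fun z => halfStep q n i z) y
                - (1/4) * ((v (n + 1) i y) ^ 2 + (v n i y) ^ 2))
              * (ρ (n + 1) i y - ρ n i y)))
          + γ * (((q (n + 1) i y - q n i y
              - deriv (ρ (n + 1) i) y + deriv (ρ n i) y)
            * halfStep q n i y))))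
          = ∫ y in xp i..xp (i + 1),
            ((W (ρ (n+1) i y) + (1/2) * ρ (n+1) i y * (v (n+1) i y) ^ 2
              + (γ/2) * (q (n+1) i y) ^ 2)
            - (W (ρ n i y) + (1/2) * ρ n i y * (v n i y) ^ 2
              + (γ/2) * (q n i y) ^ 2)
            + deriv (G i) y) :=
        intervalIntegral.integral_congr (fun y _ => pident y)
      rw [intervalIntegral.integral_add (Ien1.sub Ien0) IdG,
        intervalIntegral.integral_sub Ien1 Ien0, ftc] at merged
      rw [intervalIntegral.integral_add
          (((I1.const_mul _).add (I2.const_mul _)).sub I3) (I4.const_mul _),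
        intervalIntegral.integral_sub ((I1.const_mul _).add (I2.const_mul _)) I3,
        intervalIntegral.integral_add (I1.const_mul _) (I2.const_mul _),
        intervalIntegral.integral_const_mul, intervalIntegral.integral_const_mul,
        intervalIntegral.integral_const_mul] at merged
      exact merged
    -- sum the per-cell identities
    have hsum : (∑ i ∈ Finset.range M,
        (k n * (∫ y in xp i..xp (i + 1),
          (((ρ (n + 1) i y - ρ n i y) / k n
              + deriv (fun z => halfStep ρ n i z * halfStep v n i z) y)
            * τh n i y))
        + k n * (∫ y in xp i..xp (i + 1),
          ((halfStep ρ n i y * ((v (n + 1) i y - v n i y) / k n)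
              + deriv (fun z => halfStep ρ n i z * (halfStep v n i z) ^ 2) y
              - deriv (fun z => halfStep ρ n i z * halfStep v n i z) y
                  * halfStep v n i y
              + halfStep ρ n i y * deriv (τh n i) y
              - (1/2) * halfStep ρ n i y
                  * deriv (fun z => (halfStep v n i z) ^ 2) y)
            * halfStep v n i y))
        - (∫ y in xp i..xp (i + 1),
          (τh n i y * (ρ (n + 1) i y - ρ n i y)
            - (W (ρ (n + 1) i y) - W (ρ n i y))
            + (γ * deriv (fun z => halfStep q n i z) y
                - (1/4) * ((v (n + 1) i y) ^ 2 + (v n i y) ^ 2))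
              * (ρ (n + 1) i y - ρ n i y)))
        + γ * (∫ y in xp i..xp (i + 1),
          ((q (n + 1) i y - q n i y
              - deriv (ρ (n + 1) i) y + deriv (ρ n i) y)
            * halfStep q n i y))))
        = ∑ i ∈ Finset.range M,
          ((∫ y in xp i..xp (i + 1),
            (W (ρ (n+1) i y) + (1/2) * ρ (n+1) i y * (v (n+1) i y) ^ 2
              + (γ/2) * (q (n+1) i y) ^ 2))
          - (∫ y in xp i..xp (i + 1),
            (W (ρ n i y) + (1/2) * ρ n i y * (v n i y) ^ 2
              + (γ/2) * (q n i y) ^ 2))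
          + (G i (xp (i + 1)) - G i (xp i))) :=
      Finset.sum_congr rfl (fun i hi => cell i (Finset.mem_range.mp hi))
    have tel : (∑ i ∈ Finset.range M, (G i (xp (i + 1)) - G i (xp i)))
        = (∑ j ∈ Finset.Ico 1 M, (G (j - 1) (xp j) - G j (xp j)))
          + G (M - 1) (xp M) - G 0 (xp 0) := by
      simpa using telescope_sum (fun i j => G i (xp j)) M hM
    have node : (∑ j ∈ Finset.Ico 1 M, (G (j - 1) (xp j) - G j (xp j)))
        = k n * (∑ j ∈ Finset.Ico 1 M,
            (halfStep ρ n (j - 1) (xp j) * halfStep v n (j - 1) (xp j)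
              - halfStep ρ n j (xp j) * halfStep v n j (xp j))
            * ((τh n (j - 1) (xp j) + τh n j (xp j)) / 2))
          + k n * (∑ j ∈ Finset.Ico 1 M,
            (τh n (j - 1) (xp j) - τh n j (xp j))
            * ((halfStep ρ n (j - 1) (xp j) * halfStep v n (j - 1) (xp j)
                + halfStep ρ n j (xp j) * halfStep v n j (xp j)) / 2))
          - γ * (∑ j ∈ Finset.Ico 1 M,
            (halfStep q n (j - 1) (xp j) - halfStep q n j (xp j))
            * (((ρ (n + 1) (j - 1) (xp j) - ρ n (j - 1) (xp j))
                + (ρ (n + 1) j (xp j) - ρ n j (xp j))) / 2))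
          - γ * (∑ j ∈ Finset.Ico 1 M,
            ((ρ (n + 1) (j - 1) (xp j) - ρ n (j - 1) (xp j))
              - (ρ (n + 1) j (xp j) - ρ n j (xp j)))
            * ((halfStep q n (j - 1) (xp j) + halfStep q n j (xp j)) / 2)) := by
      rw [Finset.mul_sum, Finset.mul_sum, Finset.mul_sum, Finset.mul_sum,
        ← Finset.sum_add_distrib, ← Finset.sum_sub_distrib, ← Finset.sum_sub_distrib]
      exact Finset.sum_congr rfl (fun j _ => by simp only [hG]; ring)
    have hb0 : G 0 (xp 0) = 0 := by
      simp [hG, halfStep, hx0, (hbv n hnN).1, (hbv (n+1) hn1N).1,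
        (hbq n hnN).1, (hbq (n+1) hn1N).1]
    have hbM : G (M - 1) (xp M) = 0 := by
      simp [hG, halfStep, hxM, (hbv n hnN).2, (hbv (n+1) hn1N).2,
        (hbq n hnN).2, (hbq (n+1) hn1N).2]
    simp only [Finset.sum_add_distrib, Finset.sum_sub_distrib,
      ← Finset.mul_sum] at hsum tel node
    rw [h1 n hn, h2 n hn, h3 n hn, h4 n hn] at hsum
    linarith [hsum, tel, node, hb0, hbM]
  intro n hn
  induction n with
  | zero => rfl
  | succ m ih =>
    exact (key m (Nat.lt_of_succ_le hn)).trans (ih (Nat.le_of_succ_le hn))
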